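/- Let D = [[λ, 1], [0, λ]] with 0 < |λ| < 1. Then L = [[log λ, λ⁻¹], [0, log λ]] satisfies e^L = D (for some branch of log), and the numerical abscissa of L equals ln|λ| + 1/(2|λ|), which is strictly positive for all 0 < |λ| < 1. -/

import Mathlib

open scoped Matrix
open Complex Real

/-- The numerical range of a square complex matrix. -/
def numRange {N : ℕ} (M : Matrix (Fin N) (Fin N) ℂ) : Set ℂ :=
  {z | ∃ x : EuclideanSpace ℂ (Fin N), ‖x‖ = 1 ∧ star (x : Fin N → ℂ) ⬝ᵥ M.mulVec x = z}

/-- The numerical abscissa of a square complex matrix. -/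
noncomputable def numAbs {N : ℕ} (M : Matrix (Fin N) (Fin N) ℂ) : ℝ :=
  sSup {r : ℝ | ∃ x : EuclideanSpace ℂ (Fin N), ‖x‖ = 1 ∧ (star (x : Fin N → ℂ) ⬝ᵥ M.mulVec x).re = r}

/-- The spectral (operator 2-)norm of a square complex matrix. -/
noncomputable def spec2 {N : ℕ} (M : Matrix (Fin N) (Fin N) ℂ) : ℝ :=
  ‖Matrix.toEuclideanCLM (𝕜 := ℂ) M‖

/-- The squared Frobenius norm of a square complex matrix. -/
noncomputable def frobSq {N : ℕ} (M : Matrix (Fin N) (Fin N) ℂ) : ℝ :=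
  ∑ i, ∑ j, ‖M i j‖ ^ 2


private lemma exp_sq_zero' (N : Matrix (Fin 2) (Fin 2) ℂ) (h : N * N = 0) :
    NormedSpace.exp N = 1 + N := by
  rw [NormedSpace.exp_eq_tsum (𝕂 := ℂ)]
  have hpow : ∀ n : ℕ, n ∉ Finset.range 2 → ((n.factorial : ℂ)⁻¹ • N ^ n) = 0 := by
    intro n hn
    rw [Finset.mem_range, not_lt] at hn
    obtain ⟨k, rfl⟩ := Nat.exists_eq_add_of_le hn
    rw [pow_add, sq, h, zero_mul, smul_zero]
  show (∑' n : ℕ, (n.factorial : ℂ)⁻¹ • N ^ n) = 1 + N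
  rw [tsum_eq_sum hpow]
  simp [Finset.sum_range_succ]

private lemma quad_form_re' (lam w : ℂ) (x : EuclideanSpace ℂ (Fin 2)) (hx : ‖x‖ = 1) :
    (star (x : Fin 2 → ℂ) ⬝ᵥ (!![w, lam⁻¹; 0, w] : Matrix (Fin 2) (Fin 2) ℂ).mulVec x).re
      = w.re + (lam⁻¹ * (starRingEnd ℂ (x 0)) * x 1).re := by
  have h2 : ∑ i, ‖x i‖ ^ 2 = 1 := Real.sqrt_eq_one.mp (by rw [← EuclideanSpace.norm_eq, hx])
  have hn : ‖x 0‖ ^ 2 + ‖x 1‖ ^ 2 = 1 := by simpa [Fin.sum_univ_two] using h2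
  have key : star (x : Fin 2 → ℂ) ⬝ᵥ (!![w, lam⁻¹; 0, w] : Matrix (Fin 2) (Fin 2) ℂ).mulVec x
      = w * ((starRingEnd ℂ (x 0)) * x 0 + (starRingEnd ℂ (x 1)) * x 1)
        + lam⁻¹ * (starRingEnd ℂ (x 0)) * x 1 := by
    simp [dotProduct, Matrix.mulVec, Fin.sum_univ_two, RCLike.star_def]
    ring
  rw [key]
  simp only [Complex.add_re, Complex.mul_re, Complex.conj_re, Complex.conj_im,
    Complex.mul_im, Complex.add_im, Complex.sq_norm,
    Complex.normSq_apply] at *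
  linear_combination w.re * hn

private lemma cross_bound' (lam : ℂ) (h0 : 0 < ‖lam‖) (x0 x1 : ℂ)
    (hn : ‖x0‖ ^ 2 + ‖x1‖ ^ 2 = 1) :
    (lam⁻¹ * (starRingEnd ℂ x0) * x1).re ≤ 1 / (2 * ‖lam‖) := by
  have h := Complex.re_le_norm (lam⁻¹ * (starRingEnd ℂ x0) * x1)
  rw [norm_mul, norm_mul, norm_inv, Complex.norm_conj] at h
  have hab : ‖x0‖ * ‖x1‖ ≤ 1/2 := by
    have := sq_nonneg (‖x0‖ - ‖x1‖)
    nlinarith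
  calc (lam⁻¹ * (starRingEnd ℂ x0) * x1).re
      ≤ (‖lam‖)⁻¹ * ‖x0‖ * ‖x1‖ := h
    _ ≤ (‖lam‖)⁻¹ * (1/2) := by
        rw [mul_assoc]
        exact mul_le_mul_of_nonneg_left hab (by positivity)
    _ = 1 / (2 * ‖lam‖) := by field_simp

/-- For D = [[λ,1],[0,λ]] with 0 < |λ| < 1 and any branch w of log λ, the matrix
L = [[w, λ⁻¹],[0, w]] satisfies e^L = D, and ω(L) = ln|λ| + 1/(2|λ|) > 0. -/
theorem stmt11 (lam w : ℂ) (h0 : 0 < ‖lam‖) (h1 : ‖lam‖ < 1)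
    (hw : Complex.exp w = lam)
    (L : Matrix (Fin 2) (Fin 2) ℂ) (hL : L = !![w, lam⁻¹; 0, w]) :
    NormedSpace.exp L = !![lam, 1; 0, lam] ∧
      numAbs L = Real.log (‖lam‖) + 1 / (2 * ‖lam‖) ∧
      0 < Real.log (‖lam‖) + 1 / (2 * ‖lam‖) := by
  subst hL
  set a := ‖lam‖ with ha
  have hlam : lam ≠ 0 := by
    simpa using norm_ne_zero_iff.mp (ne_of_gt h0)
  -- w.re = log a
  have hwre : w.re = Real.log a := by
    have : a = Real.exp w.re := by rw [ha, ← hw, Complex.norm_exp]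
    rw [this, Real.log_exp]
  refine ⟨?_, ?_, ?_⟩
  · -- exponential computation
    have hsplit : (!![w, lam⁻¹; 0, w] : Matrix (Fin 2) (Fin 2) ℂ)
        = Matrix.diagonal ![w, w] + !![0, lam⁻¹; 0, 0] := by
      ext i j
      fin_cases i <;> fin_cases j <;> simp [Matrix.diagonal]
    have hcomm : Commute (Matrix.diagonal ![w, w])
        (!![0, lam⁻¹; 0, 0] : Matrix (Fin 2) (Fin 2) ℂ) := by
      unfold Commute SemiconjBy
      ext i j
      fin_cases i <;> fin_cases j <;>
        simp [Matrix.mul_apply, Fin.sum_univ_two, Matrix.diagonal, mul_comm]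
    have hN : (!![0, lam⁻¹; 0, 0] : Matrix (Fin 2) (Fin 2) ℂ) * !![0, lam⁻¹; 0, 0] = 0 := by
      ext i j
      fin_cases i <;> fin_cases j <;> simp [Matrix.mul_apply, Fin.sum_univ_two]
    rw [hsplit, Matrix.exp_add_of_commute _ _ hcomm, Matrix.exp_diagonal,
      exp_sq_zero' _ hN]
    have hpi : NormedSpace.exp (![w, w] : Fin 2 → ℂ) = ![Complex.exp w, Complex.exp w] := by
      ext i
      fin_cases i <;> simp [Pi.coe_exp, Complex.exp_eq_exp_ℂ]
    rw [hpi, hw]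
    ext i j
    fin_cases i <;> fin_cases j <;>
      simp [Matrix.mul_apply, Fin.sum_univ_two, Matrix.diagonal, Matrix.one_apply, hlam]
  · -- numerical abscissa
    set S := {r : ℝ | ∃ x : EuclideanSpace ℂ (Fin 2), ‖x‖ = 1 ∧
      (star (x : Fin 2 → ℂ) ⬝ᵥ (!![w, lam⁻¹; 0, w] : Matrix (Fin 2) (Fin 2) ℂ).mulVec x).re = r}
      with hS
    set c := Real.log a + 1 / (2 * a) with hc
    -- the witness vector
    set y : EuclideanSpace ℂ (Fin 2) :=
      WithLp.toLp 2 ![((Real.sqrt 2 : ℝ) : ℂ)⁻¹, lam * (((a * Real.sqrt 2 : ℝ)) : ℂ)⁻¹] with hy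
    have hs2 : (0:ℝ) < Real.sqrt 2 := Real.sqrt_pos.mpr (by norm_num)
    have hy0 : y 0 = ((Real.sqrt 2 : ℝ) : ℂ)⁻¹ := rfl
    have hy1 : y 1 = lam * (((a * Real.sqrt 2 : ℝ)) : ℂ)⁻¹ := rfl
    have hny : ‖y‖ = 1 := by
      rw [EuclideanSpace.norm_eq, Fin.sum_univ_two, hy0, hy1]
      have e0 : ‖((Real.sqrt 2 : ℝ) : ℂ)⁻¹‖ = (Real.sqrt 2)⁻¹ := by
        rw [norm_inv, Complex.norm_real, Real.norm_of_nonneg hs2.le]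
      have e1 : ‖lam * (((a * Real.sqrt 2 : ℝ)) : ℂ)⁻¹‖ = (Real.sqrt 2)⁻¹ := by
        rw [norm_mul, norm_inv, Complex.norm_real, Real.norm_of_nonneg (by positivity),
          ← ha, mul_inv, ← mul_assoc,
          mul_inv_cancel₀ (ne_of_gt h0), one_mul]
      rw [e0, e1, inv_pow, Real.sq_sqrt (by norm_num : (0:ℝ) ≤ 2)]
      norm_num
    have hcq : ((Real.sqrt 2 : ℝ):ℂ) * ((Real.sqrt 2 : ℝ):ℂ) = 2 := by
      rw [← Complex.ofReal_mul, Real.mul_self_sqrt (by norm_num : (0:ℝ) ≤ 2)]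
      norm_num
    have hval : (lam⁻¹ * (starRingEnd ℂ (y 0)) * y 1).re = 1 / (2 * a) := by
      rw [hy0, hy1]
      have key : lam⁻¹ * (starRingEnd ℂ (((Real.sqrt 2 : ℝ) : ℂ)⁻¹)) *
          (lam * (((a * Real.sqrt 2 : ℝ)) : ℂ)⁻¹) = (((2 * a : ℝ)) : ℂ)⁻¹ := by
        rw [← Complex.ofReal_inv, Complex.conj_ofReal, Complex.ofReal_inv]
        push_cast
        have hane : ((a:ℂ)) ≠ 0 := by exact_mod_cast ne_of_gt h0
        have hsne : ((Real.sqrt 2 : ℝ):ℂ) ≠ 0 := by exact_mod_cast ne_of_gt hs2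
        field_simp
        linear_combination (-1 : ℂ) * hcq
      rw [key, ← Complex.ofReal_inv, Complex.ofReal_re, one_div]
    have hmem : c ∈ S := by
      refine ⟨y, hny, ?_⟩
      rw [quad_form_re' lam w y hny, hval, hwre, hc]
    have hub : ∀ r ∈ S, r ≤ c := by
      rintro r ⟨x, hx, rfl⟩
      rw [quad_form_re' lam w x hx, hwre, hc]
      have h2 : ∑ i, ‖x i‖ ^ 2 = 1 :=
        Real.sqrt_eq_one.mp (by rw [← EuclideanSpace.norm_eq, hx])
      have hn : ‖x 0‖ ^ 2 + ‖x 1‖ ^ 2 = 1 := by simpa [Fin.sum_univ_two] using h2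
      have := cross_bound' lam h0 (x 0) (x 1) hn
      rw [← ha] at this
      linarith
    show sSup S = c
    exact le_antisymm (csSup_le ⟨c, hmem⟩ hub) (le_csSup ⟨c, hub⟩ hmem)
  · -- positivity
    have h2a : (0:ℝ) < 2 * a := by linarith
    have hlog : Real.log ((2*a)⁻¹) ≤ (2*a)⁻¹ - 1 :=
      Real.log_le_sub_one_of_pos (by positivity)
    rw [Real.log_inv, Real.log_mul (by norm_num) (ne_of_gt h0)] at hlog
    have hl2 : Real.log 2 < 1 := by
      have := Real.log_two_lt_d9; linarith
    rw [one_div]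
    linarith
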